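/- Let k be an even positive integer, n = k², A = D = {1, ..., k²} and B = C = {1, ..., k}. Then the number of quadruples (x,y,z,w) ∈ A × B × C × D with w = x + (y−z)² is at least k⁴/8 = n²/8. -/

import Mathlib

/-- For an even positive integer `k`, with `A = D = [1, k²]` and `B = C = [1, k]`,
the graph `w = x + (y - z)²` contains at least `k⁴/8 = n²/8` points (with `n = k²`)
of `A × B × C × D`. -/
theorem stmt_11 (k : ℕ) (hk : 0 < k) (hke : Even k) :
    (k : ℝ) ^ 4 / 8 ≤
      (((Finset.Icc (1 : ℤ) ((k : ℤ) ^ 2) ×ˢ Finset.Icc (1 : ℤ) (k : ℤ) ×ˢ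
          Finset.Icc (1 : ℤ) (k : ℤ) ×ˢ Finset.Icc (1 : ℤ) ((k : ℤ) ^ 2)).filter
        fun t => t.2.2.2 = t.1 + (t.2.1 - t.2.2.1) ^ 2).card : ℝ) := by
  obtain ⟨m, hm⟩ := hke
  have hm1 : 1 ≤ m := by omega
  set S := ((Finset.Icc (1 : ℤ) ((k : ℤ) ^ 2) ×ˢ Finset.Icc (1 : ℤ) (k : ℤ) ×ˢ
          Finset.Icc (1 : ℤ) (k : ℤ) ×ˢ Finset.Icc (1 : ℤ) ((k : ℤ) ^ 2)).filter
        fun t => t.2.2.2 = t.1 + (t.2.1 - t.2.2.1) ^ 2) with hS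
  set T := (Finset.Icc (1 : ℤ) (2 * (m : ℤ) ^ 2) ×ˢ Finset.Icc (1 : ℤ) (m : ℤ) ×ˢ
      Finset.Icc (1 : ℤ) (m : ℤ)) with hT
  have hkm : (k : ℤ) = 2 * (m : ℤ) := by push_cast [hm]; ring
  have hcard : T.card ≤ S.card := by
    apply Finset.card_le_card_of_injOn
      (fun t => (t.1, t.2.1, t.2.2, t.1 + (t.2.1 - t.2.2) ^ 2))
    · intro t ht
      simp only [hT, Finset.mem_coe, Finset.mem_product, Finset.mem_Icc] at ht
      obtain ⟨⟨hx1, hx2⟩, ⟨hy1, hy2⟩, hz1, hz2⟩ := ht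
      have hsq : (t.2.1 - t.2.2) ^ 2 ≤ ((m : ℤ) - 1) ^ 2 := by
        have h1 : t.2.1 - t.2.2 ≤ (m : ℤ) - 1 := by omega
        have h2 : -((m : ℤ) - 1) ≤ t.2.1 - t.2.2 := by omega
        nlinarith
      have hsq0 : 0 ≤ (t.2.1 - t.2.2) ^ 2 := sq_nonneg _
      have hm1' : (1 : ℤ) ≤ (m : ℤ) := by exact_mod_cast hm1
      simp only [hS, Finset.mem_coe, Finset.mem_filter, Finset.mem_product, Finset.mem_Icc, hkm]
      refine ⟨⟨⟨by omega, by nlinarith⟩, ⟨by omega, by omega⟩, ⟨by omega, by omega⟩,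
        by omega, by nlinarith⟩, trivial⟩
    · intro a _ b _ h
      simp only [Prod.mk.injEq] at h
      exact Prod.ext h.1 (Prod.ext h.2.1 h.2.2.1)
  have hTcard : (T.card : ℝ) = 2 * (m : ℝ) ^ 4 := by
    have h2 : (2 * (m : ℤ) ^ 2 + 1 - 1).toNat = 2 * m ^ 2 := by
      rw [show (2 * (m : ℤ) ^ 2 + 1 - 1) = ((2 * m ^ 2 : ℕ) : ℤ) by push_cast; ring,
        Int.toNat_natCast]
    have h3 : ((m : ℤ) + 1 - 1).toNat = m := by omega
    simp only [hT, Finset.card_product, Int.card_Icc, h2, h3]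
    push_cast; ring
  have : ((k : ℝ)) ^ 4 / 8 = 2 * (m : ℝ) ^ 4 := by
    have : (k : ℝ) = 2 * (m : ℝ) := by push_cast [hm]; ring
    rw [this]; ring
  rw [this, ← hTcard]
  exact_mod_cast hcard
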